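/- arXiv:1003.3844 — 9 statements merged into one kernel-verified Lean document; each statement's English description precedes it below -/
import Mathlib

section
/- For any N ≥ 2 and any y ∈ {0,1}^N, define a deterministic strategy where party i outputs a_i = y_{i+1} if its input is x_i = y_i, and a_i = ȳ_{i+1} if x_i = ȳ_i. Then this strategy wins the GYNI game (i.e., a_i = x_{i+1} for all i) exactly when the global input string x equals y or ȳ, and loses for every other input string x. -/
open scoped BigOperators

/-- Bitwise negation of a bit string. -/
def negStr {N : ℕ} (x : Fin N → Bool) : Fin N → Bool := fun i => !(x i)

/-- A no-signalling box for `N` parties with binary inputs and outputs. -/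
structure NSBox (N : ℕ) where
  P : (Fin N → Bool) → (Fin N → Bool) → ℝ
  nonneg : ∀ a x, 0 ≤ P a x
  normalized : ∀ x, ∑ a, P a x = 1
  noSignalling : ∀ (S : Finset (Fin N)) (x x' : Fin N → Bool),
    (∀ i ∈ S, x i = x' i) → ∀ a : Fin N → Bool,
      ∑ a' ∈ Finset.univ.filter (fun a' => ∀ i ∈ S, a' i = a i), P a' x =
      ∑ a' ∈ Finset.univ.filter (fun a' => ∀ i ∈ S, a' i = a i), P a' x'

/-- GYNI winning probability of a no-signalling box for prior `q`. -/
noncomputable def gyniWin {N : ℕ} [NeZero N] (q : (Fin N → Bool) → ℝ) (B : NSBox N) : ℝ :=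
  ∑ x, q x * B.P (fun i => x (i + 1)) x

/-- The classical GYNI bound `ω_c = max_x (q(x) + q(x̄))`. -/
noncomputable def omegaC {N : ℕ} (q : (Fin N → Bool) → ℝ) : ℝ :=
  Finset.univ.sup' Finset.univ_nonempty (fun x => q x + q (negStr x))

/-- A deterministic local strategy wins the GYNI game on input string `x`. -/
def winsOn {N : ℕ} [NeZero N] (f : Fin N → Bool → Bool) (x : Fin N → Bool) : Bool :=
  decide (∀ i, f i (x i) = x (i + 1))

/-- Winning probability of a deterministic local strategy. -/
noncomputable def classWin {N : ℕ} [NeZero N] (q : (Fin N → Bool) → ℝ)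
    (f : Fin N → Bool → Bool) : ℝ :=
  ∑ x, q x * (if winsOn f x then (1:ℝ) else 0)

/-- The deterministic strategy where party `i` outputs `y (i+1) ⊕ x i ⊕ y i`
wins the GYNI game exactly when the input string `x` equals `y` or `ȳ`. -/
theorem gyni_classical_strategy_wins_iff {N : ℕ} [NeZero N] (hN : 2 ≤ N)
    (y : Fin N → Bool) (x : Fin N → Bool) :
    (∀ i : Fin N, xor (y (i + 1)) (xor (x i) (y i)) = x (i + 1)) ↔
      (x = y ∨ x = negStr y) := by
  constructor
  · intro h
    open Fin.NatCast in
    have key : ∀ k : ℕ, xor (x (k : Fin N)) (y (k : Fin N)) = xor (x 0) (y 0) := by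
      intro k
      induction k with
      | zero => simp
      | succ n ih =>
        have h' := h (n : Fin N)
        have hc : ((n + 1 : ℕ) : Fin N) = (n : Fin N) + 1 := by
          push_cast; ring
        rw [hc]
        rw [← h']
        rw [← ih]
        cases y ((n : Fin N) + 1) <;> cases x (n : Fin N) <;> cases y (n : Fin N) <;> simp
    cases hxy : xor (x 0) (y 0) with
    | false =>
      left; funext i
      have := key i.val
      simp only [Fin.cast_val_eq_self] at this
      rw [hxy] at this
      revert this
      cases x i <;> cases y i <;> simp
    | true =>
      right; funext i
      have := key i.val
      simp only [Fin.cast_val_eq_self] at this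
      rw [hxy] at this
      unfold negStr
      revert this
      cases x i <;> cases y i <;> simp
  · rintro (rfl | rfl) i
    · cases x i <;> simp
    · unfold negStr
      cases y i <;> cases y (i + 1) <;> simp
end

section
/- For any prior distribution q on {0,1}^N, the maximal winning probability of the GYNI game over all deterministic local strategies is at least max over x of (q(x) + q(x̄)). -/
open scoped BigOperators

/-- There is a deterministic local strategy whose GYNI winning probability is at
least `ω_c = max_x (q x + q x̄)`. -/
theorem gyni_classical_lower_bound {N : ℕ} [NeZero N] (hN : 2 ≤ N)
    (q : (Fin N → Bool) → ℝ) (hq : ∀ x, 0 ≤ q x) (hsum : ∑ x, q x = 1) :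
    ∃ f : Fin N → Bool → Bool, omegaC q ≤ classWin q f := by
  obtain ⟨x₀, -, hx₀⟩ := Finset.exists_mem_eq_sup' (Finset.univ_nonempty (α := Fin N → Bool))
    (fun x => q x + q (negStr x))
  refine ⟨fun i b => if b = x₀ i then x₀ (i + 1) else !(x₀ (i + 1)), ?_⟩
  have hwin0 : winsOn (fun i b => if b = x₀ i then x₀ (i + 1) else !(x₀ (i + 1))) x₀ = true := by
    simp [winsOn]
  have hwin1 : winsOn (fun i b => if b = x₀ i then x₀ (i + 1) else !(x₀ (i + 1)))
      (negStr x₀) = true := by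
    simp [winsOn, negStr]
  have hne : x₀ ≠ negStr x₀ := by
    intro h
    have := congrFun h (0 : Fin N)
    simp [negStr] at this
  rw [omegaC, hx₀, classWin]
  calc q x₀ + q (negStr x₀)
      = ∑ x ∈ ({x₀, negStr x₀} : Finset (Fin N → Bool)),
          q x * (if winsOn (fun i b => if b = x₀ i then x₀ (i + 1) else !(x₀ (i + 1))) x
            then (1:ℝ) else 0) := by
        rw [Finset.sum_pair hne, hwin0, hwin1]; simp
    _ ≤ _ := by
        apply Finset.sum_le_sum_of_subset_of_nonneg (Finset.subset_univ _)
        intro x _ _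
        have := hq x
        positivity
end

section
/- Let H be a (complex) Hilbert space and let {M_x : x ∈ {0,1}^N} be a family of bounded self-adjoint operators on H satisfying: (i) M_x² = M_x for all x, and (ii) M_x M_y = 0 whenever x ≠ y and x ≠ ȳ. Let q : {0,1}^N → ℝ≥0 and ω_c = max_x (q(x) + q(x̄)). Then ∑_x q(x) M_x ≤ ω_c · I as operators, i.e., for every unit vector ψ, ∑_x q(x) ⟨ψ, M_x ψ⟩ ≤ ω_c. -/
open scoped BigOperators

lemma negStr_negStr {N : ℕ} (x : Fin N → Bool) : negStr (negStr x) = x := by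
  funext i; simp [negStr]

open scoped ComplexInnerProductSpace in
/-- Quantum bound for GYNI: for self-adjoint projections `M x` with
`M x * M y = 0` whenever `y ∉ {x, x̄}`, one has `∑_x q x M x ≤ ω_c · I`. -/
theorem gyni_quantum_bound {N : ℕ} {H : Type*} [NormedAddCommGroup H]
    [InnerProductSpace ℂ H] [CompleteSpace H]
    (M : (Fin N → Bool) → (H →L[ℂ] H))
    (hsa : ∀ x, IsSelfAdjoint (M x))
    (hproj : ∀ x, M x * M x = M x)
    (horth : ∀ x y, x ≠ y → x ≠ negStr y → M x * M y = 0)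
    (q : (Fin N → Bool) → ℝ) (hq : ∀ x, 0 ≤ q x) :
    ∀ ψ : H, ‖ψ‖ = 1 → ∑ x, q x * (inner ℂ ψ ((M x) ψ) : ℂ).re ≤ omegaC q := by
  intro ψ hψ
  set ω := omegaC q with hω
  have hωle : ∀ x, q x + q (negStr x) ≤ ω :=
    fun x => Finset.le_sup' (fun x => q x + q (negStr x)) (Finset.mem_univ x)
  have hω0 : 0 ≤ ω :=
    le_trans (by have h1 := hq (fun _ => false); have h2 := hq (negStr (fun _ => false)); linarith)
      (hωle (fun _ => false))
  have hinner : ∀ x y, (inner ℂ (M x ψ) (M y ψ) : ℂ) = inner ℂ ψ ((M x * M y) ψ) := by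
    intro x y
    exact (hsa x).isSymmetric ψ (M y ψ)
  have hself : ∀ x, (inner ℂ (M x ψ) (M x ψ) : ℂ) = (‖M x ψ‖ : ℂ) ^ 2 :=
    fun x => inner_self_eq_norm_sq_to_K _
  have ha : ∀ x, (inner ℂ ψ ((M x) ψ) : ℂ).re = ‖M x ψ‖ ^ 2 := by
    intro x
    have h1 : (inner ℂ ψ ((M x) ψ) : ℂ) = inner ℂ (M x ψ) (M x ψ) := by
      conv_lhs => rw [← hproj x]
      exact (hinner x x).symm
    rw [h1, hself x, ← Complex.ofReal_pow, Complex.ofReal_re]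
  have horth' : ∀ x y, ¬(y = x ∨ y = negStr x) → (inner ℂ (M x ψ) (M y ψ) : ℂ) = 0 := by
    intro x y h
    push_neg at h
    have hx2 : x ≠ negStr y := by
      intro hh; exact h.2 (by rw [hh, negStr_negStr])
    rw [hinner, horth x y (fun hh => h.1 hh.symm) hx2]
    simp
  set u : H := ∑ x, (q x : ℂ) • (M x ψ) with hu
  set t : ℝ := ∑ x, q x * (inner ℂ ψ ((M x) ψ) : ℂ).re with ht
  have ht0 : 0 ≤ t := by
    rw [ht]
    refine Finset.sum_nonneg fun x _ => ?_
    rw [ha x]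
    exact mul_nonneg (hq x) (sq_nonneg _)
  have step1 : t ≤ ‖u‖ := by
    have h1 : (inner ℂ ψ u : ℂ).re = t := by
      rw [hu, inner_sum, ht, Complex.re_sum]
      refine Finset.sum_congr rfl fun x _ => ?_
      rw [inner_smul_right]
      simp
    calc t = (inner ℂ ψ u : ℂ).re := h1.symm
      _ ≤ ‖(inner ℂ ψ u : ℂ)‖ := Complex.re_le_norm _
      _ ≤ ‖ψ‖ * ‖u‖ := norm_inner_le_norm _ _
      _ = ‖u‖ := by rw [hψ, one_mul]
  have step2 : ‖u‖ ^ 2 ≤ ω * t := by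
    have hexp : ‖u‖ ^ 2 = ∑ x, ∑ y, q x * q y * (inner ℂ (M x ψ) (M y ψ) : ℂ).re := by
      have h2 : (inner ℂ u u : ℂ) = ∑ x, ∑ y, ((q x * q y : ℝ) : ℂ) * inner ℂ (M x ψ) (M y ψ) := by
        rw [hu, sum_inner]
        refine Finset.sum_congr rfl fun x _ => ?_
        rw [inner_sum]
        refine Finset.sum_congr rfl fun y _ => ?_
        rw [inner_smul_left, inner_smul_right, Complex.conj_ofReal, Complex.ofReal_mul]
        ring
      have hre : ‖u‖ ^ 2 = (inner ℂ u u : ℂ).re := by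
        rw [← @inner_self_eq_norm_sq ℂ]
        rfl
      rw [hre, h2, Complex.re_sum]
      refine Finset.sum_congr rfl fun x _ => ?_
      rw [Complex.re_sum]
      exact Finset.sum_congr rfl fun y _ => Complex.re_ofReal_mul _ _
    have hbound : ∀ x y, q x * q y * (inner ℂ (M x ψ) (M y ψ) : ℂ).re ≤
        (if y ∈ ({x, negStr x} : Finset (Fin N → Bool)) then
          q x * q y * (‖M x ψ‖ * ‖M y ψ‖) else 0) := by
      intro x y
      by_cases h : y ∈ ({x, negStr x} : Finset (Fin N → Bool))
      · rw [if_pos h]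
        refine mul_le_mul_of_nonneg_left ?_ (mul_nonneg (hq x) (hq y))
        calc (inner ℂ (M x ψ) (M y ψ) : ℂ).re ≤ ‖(inner ℂ (M x ψ) (M y ψ) : ℂ)‖ :=
              Complex.re_le_norm _
          _ ≤ ‖M x ψ‖ * ‖M y ψ‖ := norm_inner_le_norm _ _
      · rw [if_neg h, horth' x y (by simpa [Finset.mem_insert] using h)]
        simp
    have hsum2 : ∀ x, ∑ y, (if y ∈ ({x, negStr x} : Finset (Fin N → Bool)) then
          q x * q y * (‖M x ψ‖ * ‖M y ψ‖) else 0) ≤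
        q x * q x * (‖M x ψ‖ * ‖M x ψ‖)
          + q x * q (negStr x) * (‖M x ψ‖ * ‖M (negStr x) ψ‖) := by
      intro x
      rw [Finset.sum_ite_mem, Finset.univ_inter]
      by_cases hc : negStr x = x
      · rw [hc]
        rw [Finset.pair_eq_singleton, Finset.sum_singleton]
        have : 0 ≤ q x * q x * (‖M x ψ‖ * ‖M x ψ‖) :=
          mul_nonneg (mul_nonneg (hq x) (hq x)) (mul_nonneg (norm_nonneg _) (norm_nonneg _))
        linarith
      · rw [Finset.sum_pair (fun h => hc h.symm)]
    have hhalf : ∀ x, q x * q x * (‖M x ψ‖ * ‖M x ψ‖)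
          + q x * q (negStr x) * (‖M x ψ‖ * ‖M (negStr x) ψ‖) ≤
        q x * q x * ‖M x ψ‖ ^ 2
          + q x * q (negStr x) * ((‖M x ψ‖ ^ 2 + ‖M (negStr x) ψ‖ ^ 2) / 2) := by
      intro x
      have h1 : 0 ≤ q x * q (negStr x) := mul_nonneg (hq x) (hq (negStr x))
      nlinarith [sq_nonneg (‖M x ψ‖ - ‖M (negStr x) ψ‖)]
    have hswap : ∑ x, q x * q (negStr x) * ‖M (negStr x) ψ‖ ^ 2
        = ∑ x, q (negStr x) * q x * ‖M x ψ‖ ^ 2 := by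
      have hinv : Function.Involutive (negStr (N := N)) := negStr_negStr
      refine Fintype.sum_equiv (hinv.toPerm _) _ _ fun x => ?_
      simp only [Function.Involutive.coe_toPerm, negStr_negStr]
    calc ‖u‖ ^ 2 = ∑ x, ∑ y, q x * q y * (inner ℂ (M x ψ) (M y ψ) : ℂ).re := hexp
      _ ≤ ∑ x, ∑ y, (if y ∈ ({x, negStr x} : Finset (Fin N → Bool)) then
            q x * q y * (‖M x ψ‖ * ‖M y ψ‖) else 0) :=
          Finset.sum_le_sum fun x _ => Finset.sum_le_sum fun y _ => hbound x y
      _ ≤ ∑ x, (q x * q x * (‖M x ψ‖ * ‖M x ψ‖)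
            + q x * q (negStr x) * (‖M x ψ‖ * ‖M (negStr x) ψ‖)) :=
          Finset.sum_le_sum fun x _ => hsum2 x
      _ ≤ ∑ x, (q x * q x * ‖M x ψ‖ ^ 2
            + q x * q (negStr x) * ((‖M x ψ‖ ^ 2 + ‖M (negStr x) ψ‖ ^ 2) / 2)) :=
          Finset.sum_le_sum fun x _ => hhalf x
      _ = ∑ x, (q x * q x * ‖M x ψ‖ ^ 2 + q x * q (negStr x) * ‖M x ψ‖ ^ 2 / 2)
            + (∑ x, q x * q (negStr x) * ‖M (negStr x) ψ‖ ^ 2) / 2 := by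
          rw [Finset.sum_div, ← Finset.sum_add_distrib]
          refine Finset.sum_congr rfl fun x _ => ?_
          ring
      _ = ∑ x, (q x + q (negStr x)) * (q x * ‖M x ψ‖ ^ 2) := by
          rw [hswap, Finset.sum_div, ← Finset.sum_add_distrib]
          refine Finset.sum_congr rfl fun x _ => ?_
          ring
      _ ≤ ∑ x, ω * (q x * ‖M x ψ‖ ^ 2) := by
          refine Finset.sum_le_sum fun x _ => ?_
          exact mul_le_mul_of_nonneg_right (hωle x) (mul_nonneg (hq x) (sq_nonneg _))
      _ = ω * t := by
          rw [ht, Finset.mul_sum]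
          refine Finset.sum_congr rfl fun x _ => ?_
          rw [ha x]
  nlinarith [norm_nonneg u, step1, step2, hω0, ht0]
end

section
/- Any family of probability distributions P(a|x) (a, x ∈ {0,1}^N, N ≥ 2) satisfying the no-signalling conditions satisfies ∑_{x ∈ {0,1}^N} P(a_i = x_{i+1} for all i | x) ≤ 2. -/
open scoped BigOperators

namespace GYNI

variable {N : ℕ} [NeZero N]

noncomputable def F (B : NSBox N) (k : ℕ) (x : Fin N → Bool) : ℝ :=
  ∑ a ∈ Finset.univ.filter
      (fun a : Fin N → Bool => ∀ i : Fin N, (i : ℕ) + 1 < k → a i = x (i + 1)),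
    B.P a x

lemma F_one (B : NSBox N) (x : Fin N → Bool) : F B 1 x = 1 := by
  have h : (Finset.univ.filter
      (fun a : Fin N → Bool => ∀ i : Fin N, (i : ℕ) + 1 < 1 → a i = x (i + 1)))
      = Finset.univ := by
    apply Finset.filter_true_of_mem
    intro a _ i hi
    exact absurd hi (by omega)
  rw [F, h, B.normalized]

lemma fin_add_one_val (i : Fin N) (h : (i : ℕ) + 1 < N) : ((i + 1 : Fin N) : ℕ) = (i : ℕ) + 1 := by
  have h1 : (1 : ℕ) % N = 1 := Nat.mod_eq_of_lt (by omega)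
  rw [Fin.add_def]
  simp only [Fin.val_one', h1]
  exact Nat.mod_eq_of_lt h

lemma F_step (B : NSBox N) (k : ℕ) (hk1 : 1 ≤ k) (hk : k < N) (x : Fin N → Bool) :
    F B (k+1) x + F B (k+1) (Function.update x ⟨k, hk⟩ (!x ⟨k, hk⟩)) = F B k x := by
  set κ : Fin N := ⟨k, hk⟩ with hκ
  set x' : Fin N → Bool := Function.update x κ (!x κ) with hx'
  have hjk : k - 1 < N := by omega
  set j : Fin N := ⟨k - 1, hjk⟩ with hj
  have hj1 : j + 1 = κ := by
    have h := fin_add_one_val j (by show k - 1 + 1 < N; omega)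
    apply Fin.ext
    rw [h]
    show k - 1 + 1 = k
    omega
  have hx'κ : x' κ = !x κ := Function.update_self κ _ x
  have hx'ne : ∀ i : Fin N, i ≠ κ → x' i = x i := fun i h => Function.update_of_ne h _ x
  have hfin : ∀ i : Fin N, (i : ℕ) + 1 < k + 1 → ((i + 1 : Fin N) : ℕ) = (i : ℕ) + 1 := by
    intro i hi
    exact fin_add_one_val i (by omega)
  -- targets of x' below k agree with x, except at position k
  have htarget : ∀ i : Fin N, (i : ℕ) + 1 < k → x' (i + 1) = x (i + 1) := by
    intro i hi
    apply hx'ne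
    intro hcon
    have h := hfin i (by omega)
    rw [hcon] at h
    have : k = (i : ℕ) + 1 := h
    omega
  -- no-signalling: the x'-event has the same probability under input x
  have hNS : F B (k+1) x' =
      ∑ a ∈ Finset.univ.filter
        (fun a : Fin N → Bool => ∀ i : Fin N, (i : ℕ) + 1 < k + 1 → a i = x' (i + 1)),
      B.P a x := by
    set S : Finset (Fin N) := Finset.univ.filter (fun i : Fin N => (i : ℕ) + 1 < k + 1) with hS
    have hmem : ∀ i : Fin N, i ∈ S ↔ (i : ℕ) + 1 < k + 1 := by
      intro i; simp [hS]
    have hfilt :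
        (Finset.univ.filter
          (fun a : Fin N → Bool => ∀ i : Fin N, (i : ℕ) + 1 < k + 1 → a i = x' (i + 1)))
        = Finset.univ.filter (fun a : Fin N → Bool => ∀ i ∈ S, a i = (fun i => x' (i+1)) i) := by
      apply Finset.filter_congr
      intro a _
      constructor
      · intro h i hi; exact h i ((hmem i).1 hi)
      · intro h i hi; exact h i ((hmem i).2 hi)
    have hagree : ∀ i ∈ S, x' i = x i := by
      intro i hi
      apply hx'ne
      intro hcon
      have := (hmem i).1 hi
      rw [hcon] at this; simp [hκ] at this
    rw [F, hfilt]
    exact B.noSignalling S x' x hagree (fun i => x' (i+1))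
  -- rewrite the two (k+1)-filters as (k-filter ∧ value of a j)
  have hsplit1 : (Finset.univ.filter
      (fun a : Fin N → Bool => ∀ i : Fin N, (i : ℕ) + 1 < k + 1 → a i = x (i + 1)))
      = (Finset.univ.filter
        (fun a : Fin N → Bool => ∀ i : Fin N, (i : ℕ) + 1 < k → a i = x (i + 1))).filter
        (fun a => a j = x κ) := by
    rw [Finset.filter_filter]
    apply Finset.filter_congr
    intro a _
    constructor
    · intro h
      refine ⟨fun i hi => h i (by omega), ?_⟩
      have := h j (by simp [hj]; omega)
      rwa [hj1] at this
    · rintro ⟨h1, h2⟩ i hi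
      rcases Nat.lt_or_ge ((i : ℕ) + 1) k with hc | hc
      · exact h1 i hc
      · have hik : (i : ℕ) = k - 1 := by omega
        have : i = j := Fin.ext (by simp [hj, hik])
        rw [this, hj1]; exact h2
  have hsplit2 : (Finset.univ.filter
      (fun a : Fin N → Bool => ∀ i : Fin N, (i : ℕ) + 1 < k + 1 → a i = x' (i + 1)))
      = (Finset.univ.filter
        (fun a : Fin N → Bool => ∀ i : Fin N, (i : ℕ) + 1 < k → a i = x (i + 1))).filter
        (fun a => ¬ a j = x κ) := by
    rw [Finset.filter_filter]
    apply Finset.filter_congr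
    intro a _
    constructor
    · intro h
      refine ⟨fun i hi => by rw [← htarget i hi]; exact h i (by omega), ?_⟩
      have := h j (by simp [hj]; omega)
      rw [hj1, hx'κ] at this
      simp [this]
    · rintro ⟨h1, h2⟩ i hi
      rcases Nat.lt_or_ge ((i : ℕ) + 1) k with hc | hc
      · rw [htarget i hc]; exact h1 i hc
      · have hik : (i : ℕ) = k - 1 := by omega
        have hij : i = j := Fin.ext (by simp [hj, hik])
        rw [hij, hj1, hx'κ]
        revert h2
        cases a j <;> cases x κ <;> simp
  rw [F, hNS, hsplit1, hsplit2, F]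
  exact Finset.sum_filter_add_sum_filter_not _ _ _

noncomputable def flipAt (κ : Fin N) (x : Fin N → Bool) : Fin N → Bool :=
  Function.update x κ (!x κ)

lemma flipAt_inv (κ : Fin N) : Function.Involutive (flipAt κ) := by
  intro x
  funext i
  by_cases h : i = κ
  · subst h; simp [flipAt]
  · simp [flipAt, Function.update_of_ne h]

lemma F_sum (B : NSBox N) : ∀ k, 1 ≤ k → k ≤ N → ∑ x : Fin N → Bool, F B k x = 2 ^ (N + 1 - k) := by
  intro k
  induction k with
  | zero => intro h; omega
  | succ k ih =>
    intro _ hle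
    rcases Nat.eq_zero_or_pos k with hk0 | hk1
    · subst hk0
      have : ∀ x : Fin N → Bool, F B 1 x = 1 := F_one B
      simp only [this, Finset.sum_const, Finset.card_univ, Fintype.card_fun, Fintype.card_fin,
        Fintype.card_bool, nsmul_eq_mul, mul_one]
      norm_num
    · have hk : k < N := by omega
      have hstep := fun x => F_step B k hk1 hk x
      have hflip : ∑ x : Fin N → Bool, F B (k+1) (flipAt ⟨k, hk⟩ x)
          = ∑ x : Fin N → Bool, F B (k+1) x :=
        Function.Bijective.sum_comp ((flipAt_inv ⟨k, hk⟩).bijective) _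
      have h2 : (2 : ℝ) * ∑ x : Fin N → Bool, F B (k+1) x = ∑ x : Fin N → Bool, F B k x := by
        rw [← Finset.sum_congr rfl (fun x _ => hstep x)]
        rw [Finset.sum_add_distrib]
        show 2 * _ = _ + ∑ x : Fin N → Bool, F B (k+1) (flipAt ⟨k, hk⟩ x)
        rw [hflip]; ring
      have hih := ih hk1 (by omega)
      rw [hih] at h2
      have hpow : (2 : ℝ) ^ (N + 1 - k) = 2 * 2 ^ (N + 1 - (k + 1)) := by
        have : N + 1 - k = (N + 1 - (k + 1)) + 1 := by omega
        rw [this, pow_succ]; ring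
      rw [hpow] at h2
      exact mul_left_cancel₀ (by norm_num) h2

end GYNI

/-- For any no-signalling box, the sum over all inputs of the probability of
guessing every right neighbour's input is at most 2. -/
theorem gyni_ns_sum_bound {N : ℕ} [NeZero N] (hN : 2 ≤ N) (B : NSBox N) :
    ∑ x : Fin N → Bool, B.P (fun i => x (i + 1)) x ≤ 2 := by
  have hF : ∀ x : Fin N → Bool, B.P (fun i => x (i + 1)) x ≤ GYNI.F B N x := by
    intro x
    apply Finset.single_le_sum (f := fun a => B.P a x) (fun a _ => B.nonneg a x)
    simp [GYNI.F]
  calc ∑ x : Fin N → Bool, B.P (fun i => x (i + 1)) x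
      ≤ ∑ x : Fin N → Bool, GYNI.F B N x := Finset.sum_le_sum (fun x _ => hF x)
    _ = 2 ^ (N + 1 - N) := GYNI.F_sum B N (by omega) le_rfl
    _ = 2 := by
        have h : N + 1 - N = 1 := by omega
        rw [h]; norm_num
end

section
/- For any prior distribution q on {0,1}^N and any no-signalling box P, the GYNI winning probability ω = ∑_x q(x) P(a_i = x_{i+1} ∀i | x) satisfies ω ≤ 2·ω_c, where ω_c = max_x (q(x) + q(x̄)). -/
open scoped BigOperators

namespace GyniAux

variable {N : ℕ} [NeZero N]

def Sk (N k : ℕ) : Finset (Fin N) := Finset.univ.filter (fun i => (i : ℕ) < k)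

noncomputable def fk (B : NSBox N) (k : ℕ) (x : Fin N → Bool) : ℝ :=
  ∑ a' ∈ Finset.univ.filter (fun a' => ∀ i ∈ Sk N k, a' i = x (i + 1)), B.P a' x

lemma fk_nonneg (B : NSBox N) (k : ℕ) (x : Fin N → Bool) : 0 ≤ fk B k x := by
  unfold fk
  exact Finset.sum_nonneg fun a _ => B.nonneg a x

lemma fk_zero (B : NSBox N) (x : Fin N → Bool) : fk B 0 x = 1 := by
  have h : (Finset.univ.filter (fun a' : Fin N → Bool => ∀ i ∈ Sk N 0, a' i = x (i + 1)))
      = Finset.univ := by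
    apply Finset.filter_true_of_mem
    intro a _ i hi
    simp [Sk] at hi
  unfold fk
  rw [h]
  exact B.normalized x

lemma pair_lemma (B : NSBox N) (k : ℕ) (hk : 1 ≤ k) (hkN : k < N) (x : Fin N → Bool) :
    fk B k x + fk B k (Function.update x ⟨k, hkN⟩ (!(x ⟨k, hkN⟩))) ≤ fk B (k - 1) x := by
  set c : Fin N := ⟨k, hkN⟩ with hc
  set x' : Fin N → Bool := Function.update x c (!(x c)) with hx'
  have hN2 : 2 ≤ N := by omega
  have hagree : ∀ i ∈ Sk N k, x' i = x i := by
    intro i hi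
    simp only [Sk, Finset.mem_filter] at hi
    have : i ≠ c := by
      intro h; rw [h] at hi; simp [hc] at hi
    simp [hx', Function.update_of_ne this]
  -- no-signalling: express fk B k x' with the box evaluated at input x
  have hNS : fk B k x' = ∑ a' ∈ Finset.univ.filter
      (fun a' => ∀ i ∈ Sk N k, a' i = x' (i + 1)), B.P a' x := by
    have := B.noSignalling (Sk N k) x' x hagree (fun i => x' (i + 1))
    exact this
  -- the index i₀ = k-1 lies in Sk and i₀ + 1 = c
  have hk1N : k - 1 < N := lt_of_le_of_lt (Nat.sub_le k 1) hkN
  have hone : (1 : Fin N).val = 1 := by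
    rw [Fin.val_one']
    exact Nat.mod_eq_of_lt (by omega)
  have hi₀mem : (⟨k - 1, hk1N⟩ : Fin N) ∈ Sk N k := by
    simp only [Sk, Finset.mem_filter, Finset.mem_univ, true_and]
    show k - 1 < k
    omega
  have hi₀succ : (⟨k - 1, hk1N⟩ : Fin N) + 1 = c := by
    apply Fin.ext
    show (k - 1 + (1 : Fin N).val) % N = c.val
    rw [hone, hc]
    have h1 : k - 1 + 1 = k := by omega
    rw [h1]
    exact Nat.mod_eq_of_lt hkN
  have hx'c : x' c = !(x c) := by rw [hx']; simp
  -- disjointness of the two events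
  set A := Finset.univ.filter (fun a' : Fin N → Bool => ∀ i ∈ Sk N k, a' i = x (i + 1)) with hA
  set A' := Finset.univ.filter (fun a' : Fin N → Bool => ∀ i ∈ Sk N k, a' i = x' (i + 1)) with hA'
  have hdisj : Disjoint A A' := by
    rw [Finset.disjoint_left]
    intro a ha ha'
    rw [hA, Finset.mem_filter] at ha
    rw [hA', Finset.mem_filter] at ha'
    have h1 := ha.2 _ hi₀mem
    have h2 := ha'.2 _ hi₀mem
    rw [hi₀succ] at h1 h2
    rw [h1, hx'c] at h2
    simp at h2
  -- both events refine the (k-1)-event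
  set Am := Finset.univ.filter (fun a' : Fin N → Bool => ∀ i ∈ Sk N (k - 1), a' i = x (i + 1))
    with hAm
  have hsub : A ∪ A' ⊆ Am := by
    intro a ha
    rw [Finset.mem_union] at ha
    rw [hAm, Finset.mem_filter]
    refine ⟨Finset.mem_univ a, ?_⟩
    intro i hi
    simp only [Sk, Finset.mem_filter, Finset.mem_univ, true_and] at hi
    have hik : i ∈ Sk N k := by
      simp only [Sk, Finset.mem_filter, Finset.mem_univ, true_and]; omega
    have hsucc : ((i + 1 : Fin N) : ℕ) = (i : ℕ) + 1 := by
      show ((i : ℕ) + (1 : Fin N).val) % N = (i : ℕ) + 1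
      rw [hone]
      exact Nat.mod_eq_of_lt (by omega)
    have hne : (i + 1 : Fin N) ≠ c := by
      intro h
      have := congrArg Fin.val h
      rw [hsucc] at this
      simp only [hc] at this
      omega
    have hxx' : x' (i + 1) = x (i + 1) := by
      simp [hx', Function.update_of_ne hne]
    rcases ha with ha | ha
    · rw [hA, Finset.mem_filter] at ha
      exact ha.2 i hik
    · rw [hA', Finset.mem_filter] at ha
      rw [← hxx']
      exact ha.2 i hik
  calc fk B k x + fk B k x'
      = ∑ a ∈ A, B.P a x + ∑ a ∈ A', B.P a x := by rw [hNS]; rfl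
    _ = ∑ a ∈ A ∪ A', B.P a x := (Finset.sum_union hdisj).symm
    _ ≤ ∑ a ∈ Am, B.P a x := by
        apply Finset.sum_le_sum_of_subset_of_nonneg hsub
        intro a _ _; exact B.nonneg a x
    _ = fk B (k - 1) x := rfl

omit [NeZero N] in
lemma flip_involutive (c : Fin N) :
    Function.Involutive (fun y : Fin N → Bool => Function.update y c (!(y c))) := by
  intro y
  funext i
  by_cases h : i = c
  · subst h; simp
  · simp [Function.update_of_ne h]

lemma sum_fk_le (B : NSBox N) (hN : 1 ≤ N) :
    ∀ k, k ≤ N - 1 → ∑ x, fk B k x ≤ (2 : ℝ) ^ (N - k) := by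
  intro k
  induction k with
  | zero =>
    intro _
    have : ∑ x : Fin N → Bool, fk B 0 x = ∑ x : Fin N → Bool, (1 : ℝ) := by
      apply Finset.sum_congr rfl
      intro x _
      exact fk_zero B x
    rw [this]
    simp [Finset.card_univ]
  | succ k ih =>
    intro hkN
    have hk1N : k + 1 < N := by omega
    set c : Fin N := ⟨k + 1, hk1N⟩ with hc
    have hpair : ∀ x : Fin N → Bool,
        fk B (k + 1) x + fk B (k + 1) (Function.update x c (!(x c))) ≤ fk B k x := by
      intro x
      have := pair_lemma B (k + 1) (by omega) hk1N x
      simpa using this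
    have hflip : ∑ x, fk B (k + 1) (Function.update x c (!(x c))) = ∑ x, fk B (k + 1) x := by
      exact Equiv.sum_comp ((flip_involutive (N := N) c).toPerm _) (fk B (k + 1))
    have hsum : ∑ x, fk B (k + 1) x + ∑ x, fk B (k + 1) x ≤ ∑ x, fk B k x := by
      calc ∑ x, fk B (k + 1) x + ∑ x, fk B (k + 1) x
          = ∑ x, fk B (k + 1) x + ∑ x, fk B (k + 1) (Function.update x c (!(x c))) := by
            rw [hflip]
        _ = ∑ x, (fk B (k + 1) x + fk B (k + 1) (Function.update x c (!(x c)))) := by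
            rw [Finset.sum_add_distrib]
        _ ≤ ∑ x, fk B k x := Finset.sum_le_sum fun x _ => hpair x
    have hih := ih (by omega)
    have hpow : (2 : ℝ) ^ (N - k) = 2 * (2 : ℝ) ^ (N - (k + 1)) := by
      rw [← pow_succ']
      congr 1
      omega
    have : ∑ x, fk B (k + 1) x + ∑ x, fk B (k + 1) x ≤ 2 * (2 : ℝ) ^ (N - (k + 1)) := by
      rw [← hpow]; exact le_trans hsum hih
    linarith

lemma sum_win_le_two (B : NSBox N) :
    ∑ x, B.P (fun i => x (i + 1)) x ≤ 2 := by
  have hN : 1 ≤ N := Nat.one_le_iff_ne_zero.mpr (NeZero.ne N)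
  have hterm : ∀ x : Fin N → Bool, B.P (fun i => x (i + 1)) x ≤ fk B (N - 1) x := by
    intro x
    unfold fk
    apply Finset.single_le_sum (f := fun a => B.P a x)
    · intro a _; exact B.nonneg a x
    · rw [Finset.mem_filter]
      exact ⟨Finset.mem_univ _, fun i _ => rfl⟩
  calc ∑ x, B.P (fun i => x (i + 1)) x
      ≤ ∑ x, fk B (N - 1) x := Finset.sum_le_sum fun x _ => hterm x
    _ ≤ (2 : ℝ) ^ (N - (N - 1)) := sum_fk_le B hN (N - 1) le_rfl
    _ = 2 := by
        have : N - (N - 1) = 1 := by omega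
        rw [this, pow_one]

end GyniAux

/-- The GYNI winning probability of any no-signalling box is at most `2 ω_c`. -/
theorem gyni_ns_double_bound {N : ℕ} [NeZero N] (hN : 2 ≤ N)
    (q : (Fin N → Bool) → ℝ) (hq : ∀ x, 0 ≤ q x) (hsum : ∑ x, q x = 1)
    (B : NSBox N) :
    gyniWin q B ≤ 2 * omegaC q := by
  have hwc : ∀ x, q x ≤ omegaC q := by
    intro x
    calc q x ≤ q x + q (negStr x) := le_add_of_nonneg_right (hq _)
      _ ≤ omegaC q := by
          unfold omegaC
          exact Finset.le_sup' (fun y => q y + q (negStr y)) (Finset.mem_univ x)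
  have hwc0 : 0 ≤ omegaC q := by
    calc (0:ℝ) ≤ q (fun _ => false) + q (negStr (fun _ => false)) := add_nonneg (hq _) (hq _)
      _ ≤ omegaC q := by
          unfold omegaC
          exact Finset.le_sup' (fun y => q y + q (negStr y))
            (Finset.mem_univ (fun _ => false))
  have hwin := GyniAux.sum_win_le_two B
  calc gyniWin q B = ∑ x, q x * B.P (fun i => x (i + 1)) x := rfl
    _ ≤ ∑ x, omegaC q * B.P (fun i => x (i + 1)) x := by
        apply Finset.sum_le_sum
        intro x _
        exact mul_le_mul_of_nonneg_right (hwc x) (B.nonneg _ _)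
    _ = omegaC q * ∑ x, B.P (fun i => x (i + 1)) x := by rw [Finset.mul_sum]
    _ ≤ omegaC q * 2 := mul_le_mul_of_nonneg_left hwin hwc0
    _ = 2 * omegaC q := mul_comm _ _
end

section
/- If the prior distribution q on {0,1}^N satisfies q(x) ≤ q(y) = q(ȳ) for some fixed string y and all x, then no-signalling boxes give no advantage at GYNI: the optimal no-signalling winning probability equals the optimal classical winning probability ω_c = 2q(y). In particular, for the uniform distribution q(x) = 1/2^N, ω_ns = ω_c = 1/2^{N−1}. -/
open scoped BigOperators

/-! ### Auxiliary material -/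

theorem val_add_one' {N : ℕ} [NeZero N] (hN : 2 ≤ N) (i : Fin N) (h : i.val + 1 < N) :
    ((i + 1 : Fin N)).val = i.val + 1 := by
  have h1 : ((1 : Fin N) : ℕ) = 1 := by
    rw [Fin.val_one']; exact Nat.mod_eq_of_lt (by omega)
  simp only [Fin.add_def, h1]
  exact Nat.mod_eq_of_lt h

/-- Marginal probability that outputs agree with target `t` on parties in `C`. -/
noncomputable def gg {N : ℕ} (B : NSBox N) (C : Finset (Fin N)) (t x : Fin N → Bool) : ℝ :=
  ∑ a' ∈ Finset.univ.filter (fun a' => ∀ i ∈ C, a' i = t i), B.P a' x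

/-- Parties with index `< k`. -/
def CC (N k : ℕ) : Finset (Fin N) := Finset.univ.filter (fun i => (i : ℕ) < k)

theorem gg_zero {N : ℕ} (B : NSBox N) (t x : Fin N → Bool) : gg B (CC N 0) t x = 1 := by
  have h : Finset.univ.filter (fun a' : Fin N → Bool => ∀ i ∈ CC N 0, a' i = t i) =
      Finset.univ := by
    apply Finset.filter_true_of_mem
    intro a _ i hi
    simp [CC] at hi
  rw [gg, h, B.normalized]

theorem gg_step {N : ℕ} [NeZero N] (hN : 2 ≤ N) (B : NSBox N) (k : ℕ) (hk : k + 1 < N) :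
    ∑ x, gg B (CC N k) (fun i => x (i + 1)) x
      = 2 * ∑ x, gg B (CC N (k + 1)) (fun i => x (i + 1)) x := by
  set j : Fin N := ⟨k + 1, hk⟩ with hj
  set j0 : Fin N := ⟨k, by omega⟩ with hj0
  have hj01 : j0 + 1 = j := by
    apply Fin.ext
    rw [val_add_one' hN j0 (by simp [hj0]; omega)]
  set flip : (Fin N → Bool) → (Fin N → Bool) := fun x => Function.update x j (!x j) with hflip
  have hflipinv : Function.Involutive flip := by
    intro x
    funext i
    by_cases hij : i = j
    · subst hij; simp [hflip]
    · simp [hflip, Function.update_of_ne hij]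
  have hj0mem : j0 ∈ CC N (k + 1) := by simp [CC, hj0]
  have hsub : CC N k ⊆ CC N (k + 1) := by
    intro i hi; simp [CC] at hi ⊢; omega
  have hcases : ∀ i ∈ CC N (k + 1), i ∈ CC N k ∨ i = j0 := by
    intro i hi
    simp [CC] at hi ⊢
    rcases Nat.lt_or_ge (i : ℕ) k with h | h
    · exact Or.inl h
    · right; apply Fin.ext; simp [hj0]; omega
  -- in CC N k, the shifted targets agree after flipping coordinate j
  have htag : ∀ (x : Fin N → Bool), ∀ i ∈ CC N k, (flip x) (i + 1) = x (i + 1) := by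
    intro x i hi
    simp [CC] at hi
    have : (i + 1 : Fin N) ≠ j := by
      intro h
      have := congrArg Fin.val h
      rw [val_add_one' hN i (by omega)] at this
      simp [hj] at this; omega
    simp [hflip, Function.update_of_ne this]
  have htag2 : ∀ (x : Fin N → Bool), (flip x) (j0 + 1) = !x (j0 + 1) := by
    intro x
    rw [hj01]
    simp [hflip]
  have pair : ∀ x : Fin N → Bool,
      gg B (CC N (k + 1)) (fun i => x (i + 1)) x
        + gg B (CC N (k + 1)) (fun i => (flip x) (i + 1)) (flip x)
      = gg B (CC N k) (fun i => x (i + 1)) x := by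
    intro x
    have hagree : ∀ i ∈ CC N (k + 1), (flip x) i = x i := by
      intro i hi
      simp [CC] at hi
      have : i ≠ j := by intro h; rw [h] at hi; simp [hj] at hi
      simp [hflip, Function.update_of_ne this]
    have hNS := B.noSignalling (CC N (k + 1)) (flip x) x hagree (fun i => (flip x) (i + 1))
    rw [gg, gg, gg, hNS]
    rw [Finset.sum_filter, Finset.sum_filter, Finset.sum_filter, ← Finset.sum_add_distrib]
    apply Finset.sum_congr rfl
    intro a _
    by_cases h1 : ∀ i ∈ CC N (k + 1), a i = x (i + 1)
    · have hp : ∀ i ∈ CC N k, a i = x (i + 1) := fun i hi => h1 i (hsub hi)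
      have h2 : ¬ ∀ i ∈ CC N (k + 1), a i = (flip x) (i + 1) := by
        intro h2
        have e1 := h1 j0 hj0mem
        have e2 := h2 j0 hj0mem
        rw [htag2 x, e1] at e2
        exact (Bool.self_ne_not _) e2
      rw [if_pos h1, if_pos hp, if_neg h2, add_zero]
    · by_cases h2 : ∀ i ∈ CC N (k + 1), a i = (flip x) (i + 1)
      · have hp : ∀ i ∈ CC N k, a i = x (i + 1) := by
          intro i hi
          rw [h2 i (hsub hi), htag x i hi]
        rw [if_neg h1, if_pos h2, if_pos hp]
        ring
      · have hp : ¬ ∀ i ∈ CC N k, a i = x (i + 1) := by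
          intro hp
          have hd : a j0 = x (j0 + 1) ∨ a j0 = !x (j0 + 1) := by
            cases a j0 <;> cases x (j0 + 1) <;> simp
          rcases hd with hd | hd
          · apply h1
            intro i hi
            rcases hcases i hi with h | h
            · exact hp i h
            · rw [h]; exact hd
          · apply h2
            intro i hi
            rcases hcases i hi with h | h
            · rw [htag x i h]; exact hp i h
            · rw [h, htag2 x, hd]
        rw [if_neg h1, if_neg h2, if_neg hp]
        ring
  calc ∑ x, gg B (CC N k) (fun i => x (i + 1)) x
      = ∑ x, (gg B (CC N (k + 1)) (fun i => x (i + 1)) x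
          + gg B (CC N (k + 1)) (fun i => (flip x) (i + 1)) (flip x)) := by
        exact (Finset.sum_congr rfl (fun x _ => (pair x).symm))
    _ = (∑ x, gg B (CC N (k + 1)) (fun i => x (i + 1)) x)
          + ∑ x, gg B (CC N (k + 1)) (fun i => (flip x) (i + 1)) (flip x) := by
        rw [Finset.sum_add_distrib]
    _ = 2 * ∑ x, gg B (CC N (k + 1)) (fun i => x (i + 1)) x := by
        have : ∑ x, gg B (CC N (k + 1)) (fun i => (flip x) (i + 1)) (flip x)
            = ∑ x, gg B (CC N (k + 1)) (fun i => x (i + 1)) x := by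
          apply Fintype.sum_bijective flip hflipinv.bijective
          intro x; rfl
        rw [this]; ring

theorem gg_sum {N : ℕ} [NeZero N] (hN : 2 ≤ N) (B : NSBox N) :
    ∀ k, k ≤ N - 1 → (2:ℝ)^k * ∑ x, gg B (CC N k) (fun i => x (i + 1)) x = 2^N := by
  intro k
  induction k with
  | zero =>
    intro _
    have h1 : ∀ x : Fin N → Bool, gg B (CC N 0) (fun i => x (i + 1)) x = 1 :=
      fun x => gg_zero B _ x
    rw [Finset.sum_congr rfl (fun x _ => h1 x)]
    simp [Finset.card_univ]
  | succ k ih =>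
    intro hk
    have hk1 : k + 1 < N := by omega
    have h := gg_step hN B k hk1
    have := ih (by omega)
    rw [h] at this
    rw [← this]; ring

theorem sum_shift_le_two {N : ℕ} [NeZero N] (hN : 2 ≤ N) (B : NSBox N) :
    ∑ x, B.P (fun i => x (i + 1)) x ≤ 2 := by
  have key : ∑ x, gg B (CC N (N - 1)) (fun i => x (i + 1)) x = 2 := by
    have h := gg_sum hN B (N - 1) le_rfl
    have h2 : (2:ℝ)^N = 2^(N-1) * 2 := by
      rw [← pow_succ]
      congr 1
      omega
    rw [h2] at h
    have hne : (2:ℝ)^(N-1) ≠ 0 := by positivity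
    field_simp at h
    linarith [h]
  rw [← key]
  apply Finset.sum_le_sum
  intro x _
  have hsingle : Finset.univ.filter
      (fun a' : Fin N → Bool => ∀ i ∈ Finset.univ, a' i = x (i + 1)) = {fun i => x (i + 1)} := by
    ext a
    simp [funext_iff]
  have h1 : B.P (fun i => x (i + 1)) x = gg B Finset.univ (fun i => x (i + 1)) x := by
    rw [gg, hsingle, Finset.sum_singleton]
  rw [h1, gg, gg]
  apply Finset.sum_le_sum_of_subset_of_nonneg
  · intro a ha
    simp only [Finset.mem_filter, Finset.mem_univ, true_and] at ha ⊢
    intro i _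
    exact ha i trivial
  · intro a _ _
    exact B.nonneg a x

theorem ns_upper {N : ℕ} [NeZero N] (hN : 2 ≤ N)
    (q : (Fin N → Bool) → ℝ) (hq : ∀ x, 0 ≤ q x)
    (y : Fin N → Bool) (hmax : ∀ x, q x ≤ q y) (B : NSBox N) :
    gyniWin q B ≤ 2 * q y := by
  have h1 : gyniWin q B ≤ ∑ x, q y * B.P (fun i => x (i + 1)) x := by
    apply Finset.sum_le_sum
    intro x _
    exact mul_le_mul_of_nonneg_right (hmax x) (B.nonneg _ _)
  have h2 : ∑ x, q y * B.P (fun i => x (i + 1)) x = q y * ∑ x, B.P (fun i => x (i + 1)) x := by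
    rw [Finset.mul_sum]
  calc gyniWin q B ≤ q y * ∑ x, B.P (fun i => x (i + 1)) x := by rw [← h2]; exact h1
    _ ≤ q y * 2 := mul_le_mul_of_nonneg_left (sum_shift_le_two hN B) (hq y)
    _ = 2 * q y := by ring

/-- The deterministic local box built from a strategy `f`. -/
def detBox {N : ℕ} (f : Fin N → Bool → Bool) : NSBox N where
  P a x := if a = (fun i => f i (x i)) then 1 else 0
  nonneg a x := by positivity
  normalized x := by simp
  noSignalling S x x' h a := by
    rw [Finset.sum_ite_eq' , Finset.sum_ite_eq']
    have hiff : ((fun i => f i (x i)) ∈ Finset.univ.filter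
          (fun a' : Fin N → Bool => ∀ i ∈ S, a' i = a i))
        ↔ ((fun i => f i (x' i)) ∈ Finset.univ.filter
          (fun a' : Fin N → Bool => ∀ i ∈ S, a' i = a i)) := by
      simp only [Finset.mem_filter, Finset.mem_univ, true_and]
      constructor
      · intro hh i hi; rw [← h i hi]; exact hh i hi
      · intro hh i hi; rw [h i hi]; exact hh i hi
    by_cases hc : (fun i => f i (x i)) ∈ Finset.univ.filter
        (fun a' : Fin N → Bool => ∀ i ∈ S, a' i = a i)
    · rw [if_pos hc, if_pos (hiff.mp hc)]
    · rw [if_neg hc, if_neg (fun hh => hc (hiff.mpr hh))]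

/-- If `q x ≤ q y = q ȳ` for some fixed `y` and all `x`, then no-signalling
boxes give no advantage over classical strategies at GYNI: the optimal
no-signalling winning probability equals `ω_c = 2 q y`. -/
theorem gyni_ns_no_advantage {N : ℕ} [NeZero N] (hN : 2 ≤ N)
    (q : (Fin N → Bool) → ℝ) (hq : ∀ x, 0 ≤ q x) (hsum : ∑ x, q x = 1)
    (y : Fin N → Bool) (hmax : ∀ x, q x ≤ q y) (hsym : q y = q (negStr y)) :
    omegaC q = 2 * q y ∧
      IsGreatest {w : ℝ | ∃ B : NSBox N, w = gyniWin q B} (2 * q y) := by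
  constructor
  · apply le_antisymm
    · apply Finset.sup'_le
      intro x _
      calc q x + q (negStr x) ≤ q y + q y := add_le_add (hmax x) (hmax (negStr x))
        _ = 2 * q y := by ring
    · have h := Finset.le_sup' (fun x => q x + q (negStr x)) (Finset.mem_univ y)
      have : 2 * q y = q y + q (negStr y) := by rw [← hsym]; ring
      rw [this]
      exact h
  · constructor
    · -- membership: the deterministic box achieves 2 q y
      set f : Fin N → Bool → Bool := fun i b => if b = y i then y (i + 1) else !(y (i + 1))
        with hf
      refine ⟨detBox f, ?_⟩
      have hupper := ns_upper hN q hq y hmax (detBox f)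
      have hlower : 2 * q y ≤ gyniWin q (detBox f) := by
        have hyne : y ≠ negStr y := by
          intro h
          have := congrFun h ⟨0, Nat.pos_of_ne_zero (NeZero.ne N)⟩
          simp [negStr] at this
        have hy : q y * (detBox f).P (fun i => y (i + 1)) y = q y := by
          have : (fun i => y (i + 1)) = (fun i => f i (y i)) := by
            funext i; simp [hf]
          simp [detBox, this]
        have hyn : q (negStr y) * (detBox f).P (fun i => (negStr y) (i + 1)) (negStr y)
            = q (negStr y) := by
          have : (fun i => (negStr y) (i + 1)) = (fun i => f i ((negStr y) i)) := by
            funext i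
            simp [hf, negStr]
          simp [detBox, this]
        have hsub : ({y, negStr y} : Finset (Fin N → Bool)) ⊆ Finset.univ :=
          Finset.subset_univ _
        have hpair : ∑ x ∈ ({y, negStr y} : Finset (Fin N → Bool)),
            q x * (detBox f).P (fun i => x (i + 1)) x = 2 * q y := by
          rw [Finset.sum_pair hyne, hy, hyn, ← hsym]; ring
        rw [gyniWin, ← hpair]
        apply Finset.sum_le_sum_of_subset_of_nonneg hsub
        intro x _ _
        exact mul_nonneg (hq x) ((detBox f).nonneg _ _)
      linarith
    · rintro w ⟨B, rfl⟩
      exact ns_upper hN q hq y hmax B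
end

section
/- For the tripartite GYNI inequality with uniform weight 1/4 on the four input strings (0,0,0), (0,1,1), (1,0,1), (1,1,0), any no-signalling box P satisfies P(000|000) + P(110|011) + P(011|101) + P(101|110) ≤ 4/3, i.e., the winning probability ω = (1/4)[P(000|000)+P(110|011)+P(011|101)+P(101|110)] is at most 1/3. -/
open scoped BigOperators

private lemma ns_pair (B : NSBox 3) (S : Finset (Fin 3)) (x x' a e1 e2 : Fin 3 → Bool)
    (hxx' : ∀ i ∈ S, x i = x' i)
    (hf : Finset.univ.filter (fun a' => ∀ i ∈ S, a' i = a i) = {e1, e2})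
    (hne : e1 ≠ e2) :
    B.P e1 x + B.P e2 x = B.P e1 x' + B.P e2 x' := by
  have h := B.noSignalling S x x' hxx' a
  rw [hf, Finset.sum_pair hne, Finset.sum_pair hne] at h
  exact h

private lemma sum8 (f : (Fin 3 → Bool) → ℝ) :
    ∑ a, f a = f ![false, false, false] + f ![false, false, true] + f ![false, true, false]
      + f ![false, true, true] + f ![true, false, false] + f ![true, false, true]
      + f ![true, true, false] + f ![true, true, true] := by
  rw [show (Finset.univ : Finset (Fin 3 → Bool)) =
      {![false, false, false], ![false, false, true], ![false, true, false], ![false, true, true],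
       ![true, false, false], ![true, false, true], ![true, true, false], ![true, true, true]} from by decide]
  rw [Finset.sum_insert (by decide), Finset.sum_insert (by decide), Finset.sum_insert (by decide),
      Finset.sum_insert (by decide), Finset.sum_insert (by decide), Finset.sum_insert (by decide),
      Finset.sum_pair (by decide)]
  ring

/-- Tripartite GYNI inequality: any no-signalling box satisfies
`P(000|000)+P(110|011)+P(011|101)+P(101|110) ≤ 4/3`, i.e. the winning
probability with uniform weight `1/4` on the four inputs is at most `1/3`. -/
theorem gyni_tripartite_ns_bound (B : NSBox 3) :
    B.P ![false, false, false] ![false, false, false]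
      + B.P ![true, true, false] ![false, true, true]
      + B.P ![false, true, true] ![true, false, true]
      + B.P ![true, false, true] ![true, true, false] ≤ 4 / 3 := by
  have hA1 := ns_pair B {0,1} ![false, false, false] ![false, false, true] ![false, false, false] ![false, false, false] ![false, false, true] (by decide) (by decide) (by decide)
  have hA2 := ns_pair B {0,2} ![false, true, true] ![false, false, true] ![true, true, false] ![true, false, false] ![true, true, false] (by decide) (by decide) (by decide)
  have hA3 := ns_pair B {1,2} ![true, false, true] ![false, false, true] ![false, true, true] ![false, true, true] ![true, true, true] (by decide) (by decide) (by decide)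
  have hB1 := ns_pair B {0,2} ![false, false, false] ![false, true, false] ![false, false, false] ![false, false, false] ![false, true, false] (by decide) (by decide) (by decide)
  have hB2 := ns_pair B {0,1} ![false, true, true] ![false, true, false] ![true, true, false] ![true, true, false] ![true, true, true] (by decide) (by decide) (by decide)
  have hB4 := ns_pair B {1,2} ![true, true, false] ![false, true, false] ![true, false, true] ![false, false, true] ![true, false, true] (by decide) (by decide) (by decide)
  have hC1 := ns_pair B {1,2} ![false, false, false] ![true, false, false] ![false, false, false] ![false, false, false] ![true, false, false] (by decide) (by decide) (by decide)
  have hC3 := ns_pair B {0,1} ![true, false, true] ![true, false, false] ![false, true, true] ![false, true, false] ![false, true, true] (by decide) (by decide) (by decide)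
  have hC4 := ns_pair B {0,2} ![true, true, false] ![true, false, false] ![true, false, true] ![true, false, true] ![true, true, true] (by decide) (by decide) (by decide)
  have hD2 := ns_pair B {1,2} ![false, true, true] ![true, true, true] ![true, true, false] ![false, true, false] ![true, true, false] (by decide) (by decide) (by decide)
  have hD3 := ns_pair B {0,2} ![true, false, true] ![true, true, true] ![false, true, true] ![false, false, true] ![false, true, true] (by decide) (by decide) (by decide)
  have hD4 := ns_pair B {0,1} ![true, true, false] ![true, true, true] ![true, false, true] ![true, false, false] ![true, false, true] (by decide) (by decide) (by decide)
  have hN0 := B.normalized ![false, false, true]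
  rw [sum8] at hN0
  have hN1 := B.normalized ![false, true, false]
  rw [sum8] at hN1
  have hN2 := B.normalized ![true, false, false]
  rw [sum8] at hN2
  have hN3 := B.normalized ![true, true, true]
  rw [sum8] at hN3
  have nn0 := B.nonneg ![false, false, false] ![false, false, true]
  have nn1 := B.nonneg ![false, false, false] ![false, true, false]
  have nn2 := B.nonneg ![false, false, false] ![true, false, false]
  have nn3 := B.nonneg ![false, false, false] ![true, true, true]
  have nn4 := B.nonneg ![false, false, true] ![false, false, false]
  have nn5 := B.nonneg ![false, false, true] ![false, false, true]
  have nn6 := B.nonneg ![false, false, true] ![false, true, false]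
  have nn7 := B.nonneg ![false, false, true] ![true, false, false]
  have nn8 := B.nonneg ![false, false, true] ![true, false, true]
  have nn9 := B.nonneg ![false, false, true] ![true, true, false]
  have nn10 := B.nonneg ![false, false, true] ![true, true, true]
  have nn11 := B.nonneg ![false, true, false] ![false, false, false]
  have nn12 := B.nonneg ![false, true, false] ![false, false, true]
  have nn13 := B.nonneg ![false, true, false] ![false, true, false]
  have nn14 := B.nonneg ![false, true, false] ![false, true, true]
  have nn15 := B.nonneg ![false, true, false] ![true, false, false]
  have nn16 := B.nonneg ![false, true, false] ![true, false, true]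
  have nn17 := B.nonneg ![false, true, false] ![true, true, true]
  have nn18 := B.nonneg ![false, true, true] ![false, false, true]
  have nn19 := B.nonneg ![false, true, true] ![false, true, false]
  have nn20 := B.nonneg ![false, true, true] ![true, false, false]
  have nn21 := B.nonneg ![false, true, true] ![true, true, true]
  have nn22 := B.nonneg ![true, false, false] ![false, false, false]
  have nn23 := B.nonneg ![true, false, false] ![false, false, true]
  have nn24 := B.nonneg ![true, false, false] ![false, true, false]
  have nn25 := B.nonneg ![true, false, false] ![false, true, true]
  have nn26 := B.nonneg ![true, false, false] ![true, false, false]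
  have nn27 := B.nonneg ![true, false, false] ![true, true, false]
  have nn28 := B.nonneg ![true, false, false] ![true, true, true]
  have nn29 := B.nonneg ![true, false, true] ![false, false, true]
  have nn30 := B.nonneg ![true, false, true] ![false, true, false]
  have nn31 := B.nonneg ![true, false, true] ![true, false, false]
  have nn32 := B.nonneg ![true, false, true] ![true, true, true]
  have nn33 := B.nonneg ![true, true, false] ![false, false, true]
  have nn34 := B.nonneg ![true, true, false] ![false, true, false]
  have nn35 := B.nonneg ![true, true, false] ![true, false, false]
  have nn36 := B.nonneg ![true, true, false] ![true, true, true]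
  have nn37 := B.nonneg ![true, true, true] ![false, false, true]
  have nn38 := B.nonneg ![true, true, true] ![false, true, false]
  have nn39 := B.nonneg ![true, true, true] ![false, true, true]
  have nn40 := B.nonneg ![true, true, true] ![true, false, false]
  have nn41 := B.nonneg ![true, true, true] ![true, false, true]
  have nn42 := B.nonneg ![true, true, true] ![true, true, false]
  have nn43 := B.nonneg ![true, true, true] ![true, true, true]
  linarith
end

section
/- For any tripartite no-signalling box, any three of the four probabilities P(000|000), P(110|011), P(011|101), P(101|110) sum to at most 1. -/
open scoped BigOperators

lemma NSBox.marg (B : NSBox 3) (S : Finset (Fin 3)) (x x' a : Fin 3 → Bool)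
    (h : ∀ i ∈ S, x i = x' i) :
    B.P a x ≤ ∑ a' ∈ Finset.univ.filter (fun (a' : Fin 3 → Bool) => ∀ i ∈ S, a' i = a i), B.P a' x' := by
  rw [← B.noSignalling S x x' h a]
  refine Finset.single_le_sum (fun i _ => B.nonneg i x) ?_
  simp

lemma NSBox.triple_bound (B : NSBox 3) (x' x1 x2 x3 a1 a2 a3 : Fin 3 → Bool)
    (S1 S2 S3 : Finset (Fin 3))
    (h1 : ∀ i ∈ S1, x1 i = x' i) (h2 : ∀ i ∈ S2, x2 i = x' i)
    (h3 : ∀ i ∈ S3, x3 i = x' i)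
    (hd12 : Disjoint (Finset.univ.filter (fun (a' : Fin 3 → Bool) => ∀ i ∈ S1, a' i = a1 i))
      (Finset.univ.filter (fun (a' : Fin 3 → Bool) => ∀ i ∈ S2, a' i = a2 i)))
    (hd13 : Disjoint (Finset.univ.filter (fun (a' : Fin 3 → Bool) => ∀ i ∈ S1, a' i = a1 i))
      (Finset.univ.filter (fun (a' : Fin 3 → Bool) => ∀ i ∈ S3, a' i = a3 i)))
    (hd23 : Disjoint (Finset.univ.filter (fun (a' : Fin 3 → Bool) => ∀ i ∈ S2, a' i = a2 i))
      (Finset.univ.filter (fun (a' : Fin 3 → Bool) => ∀ i ∈ S3, a' i = a3 i))) :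
    B.P a1 x1 + B.P a2 x2 + B.P a3 x3 ≤ 1 := by
  set F1 := Finset.univ.filter (fun (a' : Fin 3 → Bool) => ∀ i ∈ S1, a' i = a1 i)
  set F2 := Finset.univ.filter (fun (a' : Fin 3 → Bool) => ∀ i ∈ S2, a' i = a2 i)
  set F3 := Finset.univ.filter (fun (a' : Fin 3 → Bool) => ∀ i ∈ S3, a' i = a3 i)
  have m1 := B.marg S1 x1 x' a1 h1
  have m2 := B.marg S2 x2 x' a2 h2
  have m3 := B.marg S3 x3 x' a3 h3
  have hsum : (∑ a ∈ F1, B.P a x') + (∑ a ∈ F2, B.P a x') + (∑ a ∈ F3, B.P a x')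
      = ∑ a ∈ (F1 ∪ F2 ∪ F3), B.P a x' := by
    rw [Finset.sum_union (by
      rw [Finset.disjoint_union_left]; exact ⟨hd13, hd23⟩),
      Finset.sum_union hd12]
  have hle : ∑ a ∈ (F1 ∪ F2 ∪ F3), B.P a x' ≤ 1 := by
    rw [← B.normalized x']
    exact Finset.sum_le_sum_of_subset_of_nonneg (Finset.subset_univ _)
      (fun i _ _ => B.nonneg i x')
  linarith

/-- For any tripartite no-signalling box, any three of the four probabilities
`P(000|000), P(110|011), P(011|101), P(101|110)` sum to at most 1. -/
theorem gyni_tripartite_triples (B : NSBox 3) :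
    (B.P ![false, false, false] ![false, false, false]
        + B.P ![true, true, false] ![false, true, true]
        + B.P ![false, true, true] ![true, false, true] ≤ 1) ∧
    (B.P ![false, false, false] ![false, false, false]
        + B.P ![true, true, false] ![false, true, true]
        + B.P ![true, false, true] ![true, true, false] ≤ 1) ∧
    (B.P ![false, false, false] ![false, false, false]
        + B.P ![false, true, true] ![true, false, true]
        + B.P ![true, false, true] ![true, true, false] ≤ 1) ∧
    (B.P ![true, true, false] ![false, true, true]
        + B.P ![false, true, true] ![true, false, true]
        + B.P ![true, false, true] ![true, true, false] ≤ 1) := by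
  refine ⟨?_, ?_, ?_, ?_⟩
  · exact B.triple_bound ![false,false,true] _ _ _ _ _ _ {0,1} {0,2} {1,2}
      (by decide) (by decide) (by decide) (by decide) (by decide) (by decide)
  · exact B.triple_bound ![false,true,false] _ _ _ _ _ _ {0,2} {0,1} {1,2}
      (by decide) (by decide) (by decide) (by decide) (by decide) (by decide)
  · exact B.triple_bound ![true,false,false] _ _ _ _ _ _ {1,2} {0,1} {0,2}
      (by decide) (by decide) (by decide) (by decide) (by decide) (by decide)
  · exact B.triple_bound ![true,true,true] _ _ _ _ _ _ {1,2} {0,2} {0,1}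
      (by decide) (by decide) (by decide) (by decide) (by decide) (by decide)
end

section
/- For the three-party GYNI game with input distribution uniform on {x ∈ {0,1}³ : x₁⊕x₂⊕x₃ = 0}, the optimal classical (deterministic local) winning probability equals 1/4. -/
open scoped BigOperators

private def winCount (f : Fin 3 → Bool → Bool) : ℕ :=
  ((Finset.univ : Finset (Fin 3 → Bool)).filter
    (fun x => (xor (x 0) (xor (x 1) (x 2)) = false) ∧ winsOn f x = true)).card

private lemma winCount_le (f : Fin 3 → Bool → Bool) : winCount f ≤ 1 := by
  revert f; decide

private lemma classWin_eq (f : Fin 3 → Bool → Bool) :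
    classWin (fun x => if xor (x 0) (xor (x 1) (x 2)) = false
      then (1 / 4 : ℝ) else 0) f = (winCount f : ℝ) * (1 / 4) := by
  unfold classWin winCount
  simp only [ite_mul, zero_mul, mul_ite, mul_one, mul_zero, ← ite_and, and_comm]
  rw [← Finset.sum_filter, Finset.sum_const, nsmul_eq_mul]

/-- For the three-party GYNI game with input distribution uniform on the
even-parity strings `{x : x₁⊕x₂⊕x₃ = 0}`, the optimal classical
(deterministic local) winning probability equals `1/4`. -/
theorem gyni_three_party_classical_value :
    IsGreatest {w : ℝ | ∃ f : Fin 3 → Bool → Bool,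
        w = classWin (fun x => if xor (x 0) (xor (x 1) (x 2)) = false
          then (1 / 4 : ℝ) else 0) f}
      (1 / 4) := by
  constructor
  · refine ⟨fun _ _ => false, ?_⟩
    rw [classWin_eq]
    norm_num [winCount]
    decide
  · rintro w ⟨f, rfl⟩
    rw [classWin_eq]
    have h := winCount_le f
    have : (winCount f : ℝ) ≤ 1 := by exact_mod_cast h
    nlinarith
end
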